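/- The minimal cardinality of a set of reals that does not satisfy Ufin(O,Ω) equals 𝔡, the dominating number, i.e., the minimal cardinality of a dominating subset of ℕ^ℕ. -/

import Mathlib

open Filter

/-- `f ≤* g`: `f n ≤ g n` for all but finitely many `n`. -/
def EvLE (f g : ℕ → ℕ) : Prop := ∀ᶠ n in atTop, f n ≤ g n

/-- A subset of the Baire space is dominating if every function is
eventually dominated by a member of it. -/
def Dominating (Y : Set (ℕ → ℕ)) : Prop := ∀ g : ℕ → ℕ, ∃ f ∈ Y, EvLE g f

/-- A subset of the Baire space is bounded (w.r.t. `≤*`) if some single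
function eventually dominates all its members. -/
def BoundedStar (Y : Set (ℕ → ℕ)) : Prop := ∃ g : ℕ → ℕ, ∀ f ∈ Y, EvLE f g

/-- `maxfin Y`: pointwise maxima of nonempty finite subsets of `Y`. -/
def maxfin (Y : Set (ℕ → ℕ)) : Set (ℕ → ℕ) :=
  {g | ∃ F : Finset (ℕ → ℕ), F.Nonempty ∧ ↑F ⊆ Y ∧ g = fun n => F.sup (fun f => f n)}

/-- `Y` is `k`-dominating: for each `f` there are `g_1, …, g_k ∈ Y` whose
pointwise maximum eventually dominates `f`. -/
def KDominating (Y : Set (ℕ → ℕ)) (k : ℕ) : Prop :=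
  ∀ f : ℕ → ℕ, ∃ g : Fin k → (ℕ → ℕ), (∀ i, g i ∈ Y) ∧
    ∀ᶠ n in atTop, f n ≤ Finset.univ.sup (fun i => g i n)

/-- An open cover of a topological space. -/
def IsOpenCover {α : Type*} [TopologicalSpace α] (𝒰 : Set (Set α)) : Prop :=
  (∀ u ∈ 𝒰, IsOpen u) ∧ ⋃₀ 𝒰 = Set.univ

/-- An ω-cover: a cover such that every finite subset of the space is
contained in some member. -/
def IsOmegaCover {α : Type*} (𝒱 : Set (Set α)) : Prop :=
  ⋃₀ 𝒱 = Set.univ ∧ ∀ F : Set α, F.Finite → ∃ V ∈ 𝒱, F ⊆ V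

/-- A γ-cover: an infinite cover such that every point belongs to all but
finitely many members. -/
def IsGammaCover {α : Type*} (𝒱 : Set (Set α)) : Prop :=
  ⋃₀ 𝒱 = Set.univ ∧ 𝒱.Infinite ∧ ∀ x : α, {V ∈ 𝒱 | x ∉ V}.Finite

/-- A set of reals is zero-dimensional: its subspace topology has a base of
clopen sets. -/
def ZeroDimensionalSet (X : Set ℝ) : Prop :=
  ∃ B : Set (Set ↥X), TopologicalSpace.IsTopologicalBasis B ∧ ∀ b ∈ B, IsClopen b

/-- The Menger property `Ufin(O,O)`. -/
def MengerProp (α : Type*) [TopologicalSpace α] : Prop :=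
  ∀ 𝒰 : ℕ → Set (Set α), (∀ n, (𝒰 n).Countable ∧ IsOpenCover (𝒰 n)) →
    ∃ ℱ : ℕ → Set (Set α), (∀ n, (ℱ n).Finite ∧ ℱ n ⊆ 𝒰 n) ∧
      (⋃ n, ⋃₀ ℱ n) = Set.univ

/-- The Hurewicz property `Ufin(O,Γ)`. -/
def HurewiczProp (α : Type*) [TopologicalSpace α] : Prop :=
  ∀ 𝒰 : ℕ → Set (Set α), (∀ n, (𝒰 n).Countable ∧ IsOpenCover (𝒰 n)) →
    ∃ ℱ : ℕ → Set (Set α), (∀ n, (ℱ n).Finite ∧ ℱ n ⊆ 𝒰 n) ∧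
      ((∃ n, ⋃₀ ℱ n = Set.univ) ∨ IsGammaCover {s | ∃ n, s = ⋃₀ ℱ n})

/-- The property `Ufin(O,Ω)`. -/
def UfinOOmega (α : Type*) [TopologicalSpace α] : Prop :=
  ∀ 𝒰 : ℕ → Set (Set α), (∀ n, (𝒰 n).Countable ∧ IsOpenCover (𝒰 n)) →
    ∃ ℱ : ℕ → Set (Set α), (∀ n, (ℱ n).Finite ∧ ℱ n ⊆ 𝒰 n) ∧
      ((∃ n, ⋃₀ ℱ n = Set.univ) ∨ IsOmegaCover {s | ∃ n, s = ⋃₀ ℱ n})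


open Topology

lemma ufin_of_finite (α : Type*) [TopologicalSpace α] [Finite α] : UfinOOmega α := by
  intro 𝒰 h
  have hcov := (h 0).2.2
  have hx : ∀ x : α, ∃ u ∈ 𝒰 0, x ∈ u := by
    intro x
    have : x ∈ ⋃₀ 𝒰 0 := hcov ▸ Set.mem_univ x
    exact this
  choose U hU hxU using hx
  refine ⟨fun n => if n = 0 then Set.range U else ∅, fun n => ?_, Or.inl ⟨0, ?_⟩⟩
  · by_cases hn : n = 0 <;> simp [hn, Set.finite_range, Set.range_subset_iff, hU]
  · simp only [if_pos rfl]
    ext x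
    simp only [Set.mem_sUnion, Set.mem_univ, iff_true]
    exact ⟨U x, Set.mem_range_self x, hxU x⟩

lemma exists_dominating_of_not_ufin (α : Type) [TopologicalSpace α]
    (h : ¬ UfinOOmega α) : ∃ D : Set (ℕ → ℕ), Dominating D ∧ Cardinal.mk ↥D ≤ Cardinal.mk α := by
  have hinf : Infinite α := by
    by_contra hfin
    haveI := Finite.of_not_infinite hfin
    exact h (ufin_of_finite α)
  have hne : Nonempty α := inferInstance
  simp only [UfinOOmega, not_forall] at h
  obtain ⟨𝒰, h𝒰, hfail⟩ := h
  push_neg at hfail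
  have henum : ∀ n, ∃ u : ℕ → Set α, 𝒰 n = Set.range u := by
    intro n
    refine ((h𝒰 n).1).exists_eq_range ?_
    rcases hne with ⟨x⟩
    have : x ∈ ⋃₀ 𝒰 n := (h𝒰 n).2.2 ▸ Set.mem_univ x
    obtain ⟨u, hu, _⟩ := this
    exact ⟨u, hu⟩
  choose u hu using henum
  have hmem : ∀ (x : α) (n : ℕ), ∃ k, x ∈ u n k := by
    intro x n
    have : x ∈ ⋃₀ 𝒰 n := (h𝒰 n).2.2 ▸ Set.mem_univ x
    obtain ⟨s, hs, hxs⟩ := this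
    rw [hu n] at hs
    obtain ⟨k, rfl⟩ := hs
    exact ⟨k, hxs⟩
  choose f hf using hmem
  set F : Finset α → (ℕ → ℕ) := fun E n => E.sup (fun x => f x n) with hF
  refine ⟨Set.range F, ?_, le_trans Cardinal.mk_range_le (le_of_eq (Cardinal.mk_finset_of_infinite α))⟩
  intro g
  by_contra hdom
  push_neg at hdom
  have hfreq : ∀ E : Finset α, ∃ n, F E n < g n := by
    intro E
    have h1 := hdom (F E) (Set.mem_range_self E)
    rw [EvLE, Filter.not_eventually] at h1
    obtain ⟨n, _, hn⟩ := (Filter.frequently_atTop.mp h1) 0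
    exact ⟨n, Nat.lt_of_not_le hn⟩
  set ℱ : ℕ → Set (Set α) := fun n => u n '' {k | k ≤ g n} with hℱ
  have hsel : ∀ n, (ℱ n).Finite ∧ ℱ n ⊆ 𝒰 n := by
    intro n
    constructor
    · exact (Set.finite_Iic (g n)).image _
    · rw [hu n]; exact Set.image_subset_range _ _
  refine (hfail ℱ hsel).2 ⟨?_, ?_⟩
  · ext x
    simp only [Set.mem_sUnion, Set.mem_univ, iff_true]
    obtain ⟨n, hn⟩ := hfreq {x}
    refine ⟨⋃₀ ℱ n, ⟨n, rfl⟩, Set.mem_sUnion.mpr ⟨u n (f x n), ?_, hf x n⟩⟩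
    refine Set.mem_image_of_mem _ ?_
    have : f x n ≤ F {x} n := by simp [hF]
    exact le_of_lt (lt_of_le_of_lt this hn)
  · intro G hG
    obtain ⟨n, hn⟩ := hfreq hG.toFinset
    refine ⟨⋃₀ ℱ n, ⟨n, rfl⟩, ?_⟩
    intro x hx
    refine Set.mem_sUnion.mpr ⟨u n (f x n), Set.mem_image_of_mem _ ?_, hf x n⟩
    have : f x n ≤ F hG.toFinset n := Finset.le_sup (f := fun x => f x n) (hG.mem_toFinset.mpr hx)
    exact le_of_lt (lt_of_le_of_lt this hn)

/-- functions with "support" below some bound, as range of lists -/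
def Qset : Set (ℕ → ℕ) := Set.range (fun l : List ℕ => fun n => l.getD n 0)

lemma Qset_countable : Qset.Countable := Set.countable_range _

lemma mem_Qset (N : ℕ) (v : ℕ → ℕ) : (fun n => if n < N then v n else 0) ∈ Qset := by
  refine ⟨(List.range N).map v, ?_⟩
  funext n
  show (List.map v (List.range N)).getD n 0 = _
  by_cases hn : n < N
  · rw [List.getD_eq_getElem _ _ (by simpa using hn)]
    simp [hn]
  · rw [List.getD_eq_default _ _ (by simpa using Nat.le_of_not_lt hn)]
    simp [hn]

lemma not_ufin_union_Qset {Y : Set (ℕ → ℕ)} (hY : Dominating Y) :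
    ¬ UfinOOmega ↥(Y ∪ Qset) := by
  intro hU
  set Z := Y ∪ Qset with hZ
  set 𝒰 : ℕ → Set (Set ↥Z) := fun n => Set.range (fun k => {z : ↥Z | (z : ℕ → ℕ) n ≤ k}) with h𝒰
  obtain ⟨ℱ, hsel, hdisj⟩ := hU 𝒰 (by
    intro n
    refine ⟨Set.countable_range _, ?_, ?_⟩
    · rintro u ⟨k, rfl⟩
      have hc : Continuous (fun z : ↥Z => (z : ℕ → ℕ) n) :=
        (continuous_apply n).comp continuous_subtype_val
      exact IsOpen.preimage hc (isOpen_discrete (Set.Iic k))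
    · ext z
      simp only [Set.mem_sUnion, Set.mem_univ, iff_true]
      refine ⟨_, ⟨(z : ℕ → ℕ) n, rfl⟩, ?_⟩
      show (z : ℕ → ℕ) n ≤ (z : ℕ → ℕ) n
      exact le_rfl)
  -- bound the selections
  have hK : ∀ n (s : Set ↥Z), s ∈ ℱ n → ∃ k, s = {z : ↥Z | (z : ℕ → ℕ) n ≤ k} := by
    intro n s hs
    obtain ⟨k, hk⟩ := (hsel n).2 hs
    exact ⟨k, hk.symm⟩
  choose K hKs using hK
  classical
  set g : ℕ → ℕ := fun n => ((hsel n).1.toFinset).sup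
    (fun s => if h : s ∈ ℱ n then K n s h else 0) with hg
  have hbound : ∀ n, ⋃₀ ℱ n ⊆ {z : ↥Z | (z : ℕ → ℕ) n ≤ g n} := by
    intro n z hz
    obtain ⟨s, hs, hzs⟩ := hz
    have h1 : z ∈ {z : ↥Z | (z : ℕ → ℕ) n ≤ K n s hs} := (hKs n s hs) ▸ hzs
    have h2 : K n s hs ≤ g n := by
      have := Finset.le_sup (f := fun s => if h : s ∈ ℱ n then K n s h else 0)
        ((hsel n).1.mem_toFinset.mpr hs)
      simpa [hs] using this
    exact le_trans h1 h2
  rcases hdisj with ⟨n, hn⟩ | homega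
  · -- some ⋃₀ ℱ n = univ : contradiction with unbounded coordinate
    set q : ℕ → ℕ := fun m => if m < n + 1 then g n + 1 else 0 with hq
    have hqZ : q ∈ Z := Or.inr (mem_Qset (n+1) (fun _ => g n + 1))
    have : (⟨q, hqZ⟩ : ↥Z) ∈ ⋃₀ ℱ n := hn ▸ Set.mem_univ _
    have h3 : q n ≤ g n := hbound n this
    rw [hq] at h3
    simp only [Nat.lt_succ_self, if_pos] at h3
    omega
  · -- omega cover case
    obtain ⟨fd, hfd, hev⟩ := hY (fun n => g n + 1)
    rw [EvLE, Filter.eventually_atTop] at hev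
    obtain ⟨N, hN⟩ := hev
    set q : ℕ → ℕ := fun m => if m < N then g m + 1 else 0 with hq
    have hqZ : q ∈ Z := Or.inr (mem_Qset N (fun m => g m + 1))
    have hfZ : fd ∈ Z := Or.inl hfd
    obtain ⟨V, ⟨n, rfl⟩, hFV⟩ := homega.2 {(⟨fd, hfZ⟩ : ↥Z), ⟨q, hqZ⟩}
      ((Set.finite_singleton _).insert _)
    have h1 : fd n ≤ g n := hbound n (hFV (Set.mem_insert _ _))
    have h2 : q n ≤ g n := hbound n (hFV (Set.mem_insert_of_mem _ rfl))
    by_cases hn : n < N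
    · simp only [hq, if_pos hn] at h2; omega
    · have := hN n (Nat.le_of_not_lt hn); omega

/-- partial sums: position of the `n`-th "true" -/
def sfun (f : ℕ → ℕ) (n : ℕ) : ℕ := n + ∑ i ∈ Finset.range n, f i

def gmap (f : ℕ → ℕ) (k : ℕ) : Bool := (List.range (k+1)).any (fun n => sfun f n == k)

lemma sfun_zero (f : ℕ → ℕ) : sfun f 0 = 0 := by simp [sfun]

lemma sfun_succ (f : ℕ → ℕ) (n : ℕ) : sfun f (n+1) = sfun f n + f n + 1 := by
  simp [sfun, Finset.sum_range_succ]; omega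

lemma sfun_strictMono (f : ℕ → ℕ) : StrictMono (sfun f) := by
  apply strictMono_nat_of_lt_succ
  intro n
  rw [sfun_succ]
  omega

lemma le_sfun (f : ℕ → ℕ) (n : ℕ) : n ≤ sfun f n := Nat.le_add_right _ _

lemma sfun_def (f : ℕ → ℕ) (n : ℕ) : sfun f n = n + ∑ i ∈ Finset.range n, f i := rfl

lemma gmap_def (f : ℕ → ℕ) (k : ℕ) :
    gmap f k = (List.range (k+1)).any (fun n => sfun f n == k) := rfl

lemma gmap_eq_true_iff (f : ℕ → ℕ) (k : ℕ) : gmap f k = true ↔ ∃ n, sfun f n = k := by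
  simp only [gmap, List.any_eq_true, beq_iff_eq, List.mem_range]
  constructor
  · rintro ⟨n, _, hn⟩; exact ⟨n, hn⟩
  · rintro ⟨n, hn⟩
    exact ⟨n, by have := le_sfun f n; omega, hn⟩

lemma gmap_agree (f f' : ℕ → ℕ) (i : ℕ)
    (h : ∀ k ≤ sfun f (i+1), gmap f' k = gmap f k) : ∀ j ≤ i, f' j = f j := by
  have hs : ∀ j, j ≤ i + 1 → sfun f' j = sfun f j := by
    intro j
    induction j with
    | zero => intro _; rw [sfun_zero, sfun_zero]
    | succ j ih =>
      intro hj
      have ihj := ih (by omega)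
      have hmono := sfun_strictMono f
      have hmono' := sfun_strictMono f'
      have hle : sfun f (j+1) ≤ sfun f (i+1) := hmono.monotone (by omega)
      -- gmap f is false strictly between sfun f j and sfun f (j+1)
      have hfalse : ∀ k, sfun f j < k → k < sfun f (j+1) → ¬ (gmap f k = true) := by
        intro k h1 h2 hk
        obtain ⟨m, hm⟩ := (gmap_eq_true_iff f k).mp hk
        rcases le_or_gt m j with hmj | hmj
        · have := hmono.monotone hmj; omega
        · have := hmono.monotone (show j + 1 ≤ m by omega); omega
      rcases lt_trichotomy (sfun f' (j+1)) (sfun f (j+1)) with hlt | heq | hgt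
      · exfalso
        set k := sfun f' (j+1) with hk
        have h1 : sfun f j < k := by
          have := hmono' (show j < j + 1 by omega); omega
        have htrue : gmap f' k = true := (gmap_eq_true_iff f' k).mpr ⟨j+1, rfl⟩
        rw [h k (by omega)] at htrue
        exact hfalse k h1 hlt htrue
      · exact heq
      · exfalso
        have htrue : gmap f (sfun f (j+1)) = true :=
          (gmap_eq_true_iff f _).mpr ⟨j+1, rfl⟩
        rw [← h _ hle] at htrue
        obtain ⟨m, hm⟩ := (gmap_eq_true_iff f' _).mp htrue
        rcases le_or_gt m j with hmj | hmj
        · have := hmono'.monotone hmj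
          have := hmono (show j < j + 1 by omega)
          omega
        · have := hmono'.monotone (show j + 1 ≤ m by omega); omega
  intro j hj
  have h1 := hs j (by omega)
  have h2 := hs (j+1) (by omega)
  rw [sfun_succ, sfun_succ] at h2
  omega

lemma gmap_injective : Function.Injective gmap := by
  intro f f' h
  funext i
  have := gmap_agree f f' i (fun k _ => (congrFun h k).symm) i le_rfl
  omega

lemma cylinder_mem_nhds {A : Type*} [TopologicalSpace A] [DiscreteTopology A]
    (x : ℕ → A) (m : ℕ) : {y : ℕ → A | ∀ k ≤ m, y k = x k} ∈ 𝓝 x := by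
  have heq : {y : ℕ → A | ∀ k ≤ m, y k = x k} =
      ⋂ i : Fin (m+1), {y : ℕ → A | y i.1 = x i.1} := by
    ext y
    simp only [Set.mem_setOf_eq, Set.mem_iInter]
    constructor
    · intro h i; exact h i.1 (Nat.lt_succ_iff.mp i.2)
    · intro h k hk; exact h ⟨k, Nat.lt_succ_iff.mpr hk⟩
  rw [heq]
  refine Filter.iInter_mem.mpr (fun i => ?_)
  have : {x i.1} ∈ 𝓝 (x i.1) := by
    rw [nhds_discrete]; rfl
  exact (continuous_apply (i.1 : ℕ)).continuousAt.preimage_mem_nhds this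

lemma continuous_dependsOn {β : Type*} [TopologicalSpace β] [DiscreteTopology β]
    (φ : (ℕ → ℕ) → β) (m : ℕ)
    (h : ∀ f f' : ℕ → ℕ, (∀ i ≤ m, f i = f' i) → φ f = φ f') : Continuous φ := by
  rw [continuous_iff_continuousAt]
  intro f
  have hpure : 𝓝 (φ f) = pure (φ f) := by rw [nhds_discrete]
  rw [ContinuousAt, hpure, Filter.tendsto_pure]
  exact Filter.mem_of_superset (cylinder_mem_nhds f m)
    (fun f' hf' => h f' f (fun i hi => hf' i hi))

lemma gmap_continuous : Continuous gmap := by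
  refine continuous_pi (fun k => ?_)
  refine continuous_dependsOn _ k (fun f f' h => ?_)
  have hsf : ∀ n, n < k + 1 → sfun f n = sfun f' n := by
    intro n hn
    rw [sfun_def, sfun_def]
    congr 1
    refine Finset.sum_congr rfl (fun i hi => ?_)
    exact h i (by rw [Finset.mem_range] at hi; omega)
  rw [gmap_def, gmap_def, Bool.eq_iff_iff, List.any_eq_true, List.any_eq_true]
  constructor
  · rintro ⟨n, hn, he⟩
    refine ⟨n, hn, ?_⟩
    rw [beq_iff_eq] at he ⊢
    rw [← hsf n (List.mem_range.mp hn)]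
    exact he
  · rintro ⟨n, hn, he⟩
    refine ⟨n, hn, ?_⟩
    rw [beq_iff_eq] at he ⊢
    rw [hsf n (List.mem_range.mp hn)]
    exact he

lemma gmap_isInducing : IsInducing gmap := by
  rw [isInducing_iff_nhds]
  intro f
  refine le_antisymm (Filter.map_le_iff_le_comap.mp gmap_continuous.continuousAt) ?_
  conv_rhs => rw [nhds_pi]
  rw [Filter.le_pi]
  intro i
  have h1 : 𝓝 (f i) = pure (f i) := by rw [nhds_discrete]
  rw [h1, Filter.tendsto_pure, Filter.eventually_iff, Filter.mem_comap]
  refine ⟨{b : ℕ → Bool | ∀ k ≤ sfun f (i+1), b k = gmap f k}, cylinder_mem_nhds _ _, ?_⟩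
  intro f' hf'
  show f' i = f i
  exact gmap_agree f f' i hf' i le_rfl

noncomputable def dterm (b : ℕ → Bool) (n : ℕ) : ℝ := if b n then 2 * (1/3)^(n+1) else 0

noncomputable def emap (b : ℕ → Bool) : ℝ := ∑' n, dterm b n

lemma uterm_summable : Summable (fun n : ℕ => 2 * (1/3:ℝ)^(n+1)) := by
  have h : Summable (fun n : ℕ => (1/3:ℝ)^n) :=
    summable_geometric_of_lt_one (by norm_num) (by norm_num)
  exact (summable_nat_add_iff 1).mpr (h.mul_left 2)

lemma dterm_nonneg (b : ℕ → Bool) (n : ℕ) : 0 ≤ dterm b n := by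
  unfold dterm; split <;> positivity

lemma dterm_le (b : ℕ → Bool) (n : ℕ) : dterm b n ≤ 2 * (1/3:ℝ)^(n+1) := by
  unfold dterm; split
  · exact le_refl _
  · positivity

lemma dterm_summable (b : ℕ → Bool) : Summable (dterm b) :=
  Summable.of_nonneg_of_le (dterm_nonneg b) (dterm_le b) uterm_summable

lemma emap_continuous : Continuous emap := by
  refine continuous_tsum (fun n => ?_) uterm_summable (fun n b => ?_)
  · exact Continuous.comp
      (continuous_of_discreteTopology (f := fun t : Bool => if t then 2*(1/3:ℝ)^(n+1) else 0))
      (continuous_apply n)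
  · rw [Real.norm_eq_abs, abs_of_nonneg (dterm_nonneg b n)]
    exact dterm_le b n

set_option maxHeartbeats 1000000 in
lemma tail_bound (b : ℕ → Bool) (n : ℕ) :
    ∑' i : ℕ, dterm b (i + (n+1)) ≤ (1/3:ℝ)^(n+1) := by
  have hsum : Summable (fun i : ℕ => dterm b (i + (n+1))) :=
    ((summable_nat_add_iff (n+1)).mpr (dterm_summable b))
  have husum : Summable (fun i : ℕ => 2 * (1/3:ℝ)^(i + (n+1) + 1)) :=
    (summable_nat_add_iff (n+1)).mpr uterm_summable
  have h1 : ∑' i : ℕ, dterm b (i + (n+1)) ≤ ∑' i : ℕ, 2 * (1/3:ℝ)^(i + (n+1) + 1) :=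
    hsum.tsum_le_tsum (fun i => dterm_le b _) husum
  refine le_trans h1 (le_of_eq ?_)
  have h2 : ∀ i : ℕ, 2 * (1/3:ℝ)^(i + (n+1) + 1) = (1/3:ℝ)^i * (2 * (1/3)^(n+2)) := by
    intro i; ring
  rw [tsum_congr h2, tsum_mul_right, tsum_geometric_of_lt_one (by norm_num) (by norm_num)]
  ring

lemma emap_lt (b b' : ℕ → Bool) (n : ℕ) (hagree : ∀ k < n, b k = b' k)
    (hb : b n = true) (hb' : b' n = false) : emap b' < emap b := by
  have hP : ∑ i ∈ Finset.range n, dterm b' i = ∑ i ∈ Finset.range n, dterm b i := by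
    refine Finset.sum_congr rfl (fun i hi => ?_)
    unfold dterm
    rw [hagree i (Finset.mem_range.mp hi)]
  have hbsum : ∑ i ∈ Finset.range (n+1), dterm b i ≤ emap b :=
    (dterm_summable b).sum_le_tsum _ (fun i _ => dterm_nonneg b i)
  have hbsplit : emap b' = ∑ i ∈ Finset.range (n+1), dterm b' i + ∑' i : ℕ, dterm b' (i + (n+1)) :=
    ((dterm_summable b').sum_add_tsum_nat_add (n+1)).symm
  have h1 : emap b' ≤ ∑ i ∈ Finset.range (n+1), dterm b' i + (1/3)^(n+1) := by
    rw [hbsplit]; exact add_le_add_right (tail_bound b' n) _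
  have h2 : ∑ i ∈ Finset.range (n+1), dterm b' i = ∑ i ∈ Finset.range n, dterm b i := by
    rw [Finset.sum_range_succ, hP]
    simp [dterm, hb']
  have h3 : ∑ i ∈ Finset.range (n+1), dterm b i
      = ∑ i ∈ Finset.range n, dterm b i + 2 * (1/3)^(n+1) := by
    rw [Finset.sum_range_succ]
    simp [dterm, hb]
  have h4 : (1/3:ℝ)^(n+1) < 2 * (1/3)^(n+1) := by
    have : (0:ℝ) < (1/3)^(n+1) := by positivity
    linarith
  calc emap b' ≤ ∑ i ∈ Finset.range n, dterm b i + (1/3)^(n+1) := by rw [← h2]; exact h1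
    _ < ∑ i ∈ Finset.range n, dterm b i + 2 * (1/3)^(n+1) := by linarith
    _ = ∑ i ∈ Finset.range (n+1), dterm b i := h3.symm
    _ ≤ emap b := hbsum

lemma emap_injective : Function.Injective emap := by
  intro b b' h
  by_contra hne
  have hex : ∃ k, b k ≠ b' k := by
    by_contra hall
    push_neg at hall
    exact hne (funext hall)
  classical
  set n := Nat.find hex with hn
  have hdiff : b n ≠ b' n := Nat.find_spec hex
  have hagree : ∀ k < n, b k = b' k := fun k hk => of_not_not (Nat.find_min hex hk)
  cases hbn : b n with
  | false =>
    cases hbn' : b' n with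
    | false => exact hdiff (hbn.trans hbn'.symm)
    | true => exact absurd h (ne_of_lt (emap_lt b' b n (fun k hk => (hagree k hk).symm) hbn' hbn))
  | true =>
    cases hbn' : b' n with
    | false => exact absurd h (ne_of_gt (emap_lt b b' n hagree hbn hbn'))
    | true => exact hdiff (hbn.trans hbn'.symm)

lemma emap_isEmbedding : IsEmbedding emap :=
  (emap_continuous.isClosedEmbedding emap_injective).isEmbedding

/-- the embedding of Baire space into the reals -/
noncomputable def Emap : (ℕ → ℕ) → ℝ := emap ∘ gmap

lemma Emap_isEmbedding : IsEmbedding Emap :=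
  emap_isEmbedding.comp (IsEmbedding.mk gmap_isInducing gmap_injective)

lemma ufin_congr {α β : Type*} [TopologicalSpace α] [TopologicalSpace β] (φ : α ≃ₜ β)
    (h : UfinOOmega α) : UfinOOmega β := by
  intro 𝒱 h𝒱
  obtain ⟨ℱ, hsel, hdisj⟩ := h (fun n => (fun V => φ ⁻¹' V) '' 𝒱 n) (by
    intro n
    refine ⟨((h𝒱 n).1).image _, ?_, ?_⟩
    · rintro u ⟨V, hV, rfl⟩
      exact ((h𝒱 n).2.1 V hV).preimage φ.continuous
    · rw [Set.sUnion_image, ← Set.preimage_sUnion, (h𝒱 n).2.2, Set.preimage_univ])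
  have key : ∀ n, ⋃₀ ((fun U => φ.symm ⁻¹' U) '' ℱ n) = φ.symm ⁻¹' (⋃₀ ℱ n) := by
    intro n
    rw [Set.sUnion_image, ← Set.preimage_sUnion]
  refine ⟨fun n => (fun U => φ.symm ⁻¹' U) '' ℱ n, fun n => ⟨(hsel n).1.image _, ?_⟩, ?_⟩
  · rintro s ⟨U, hU, rfl⟩
    obtain ⟨V, hV, rfl⟩ := (hsel n).2 hU
    have hVV : φ.symm ⁻¹' (φ ⁻¹' V) = V := by
      rw [← Set.preimage_comp]
      have : (φ : α → β) ∘ (φ.symm : β → α) = id := funext (fun y => φ.apply_symm_apply y)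
      rw [this, Set.preimage_id]
    show φ.symm ⁻¹' (φ ⁻¹' V) ∈ 𝒱 n
    rwa [hVV]
  · rcases hdisj with ⟨n, hn⟩ | hom
    · exact Or.inl ⟨n, by rw [key n, hn, Set.preimage_univ]⟩
    · refine Or.inr ⟨?_, ?_⟩
      · ext y
        simp only [Set.mem_sUnion, Set.mem_univ, iff_true]
        have : φ.symm y ∈ ⋃₀ {s | ∃ n, s = ⋃₀ ℱ n} := hom.1 ▸ Set.mem_univ _
        obtain ⟨s, ⟨n, rfl⟩, hy⟩ := this
        exact ⟨_, ⟨n, rfl⟩, (key n) ▸ (show y ∈ φ.symm ⁻¹' (⋃₀ ℱ n) from hy)⟩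
      · intro G hG
        obtain ⟨V, ⟨n, rfl⟩, hGV⟩ := hom.2 (φ.symm '' G) (hG.image _)
        refine ⟨⋃₀ ((fun U => φ.symm ⁻¹' U) '' ℱ n), ⟨n, rfl⟩, ?_⟩
        intro y hy
        rw [key n]
        exact hGV (Set.mem_image_of_mem _ hy)

/-- restriction of an embedding to a subset gives a homeomorphism onto the image -/
noncomputable def embRestrict {α β : Type*} [TopologicalSpace α] [TopologicalSpace β]
    (E : α → β) (hE : IsEmbedding E) (Z : Set α) : ↥Z ≃ₜ ↥(E '' Z) := by
  set ψ : ↥Z → ↥(E '' Z) := fun z => ⟨E z, ⟨z, z.2, rfl⟩⟩ with hψ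
  have hc : Continuous ψ := (hE.continuous.comp continuous_subtype_val).subtype_mk _
  have hbij : Function.Bijective ψ := by
    constructor
    · intro a b hab
      exact Subtype.ext (hE.injective (congrArg Subtype.val hab))
    · rintro ⟨y, z, hz, rfl⟩
      exact ⟨⟨z, hz⟩, rfl⟩
  have hind : IsInducing ψ := by
    refine IsInducing.of_comp hc continuous_subtype_val ?_
    have : (Subtype.val ∘ ψ : ↥Z → β) = E ∘ Subtype.val := rfl
    rw [this]
    exact hE.toIsInducing.comp IsInducing.subtypeVal
  exact
    { toEquiv := Equiv.ofBijective ψ hbij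
      continuous_toFun := hc
      continuous_invFun := by
        rw [hind.continuous_iff]
        exact continuous_id.congr
          (fun x => ((Equiv.ofBijective ψ hbij).apply_symm_apply x).symm) }

lemma dominating_infinite {Y : Set (ℕ → ℕ)} (hY : Dominating Y) : Y.Infinite := by
  by_contra hfin
  rw [Set.not_infinite] at hfin
  classical
  obtain ⟨f, hf, hev⟩ := hY (fun n => hfin.toFinset.sup (fun f => f n) + 1)
  rw [EvLE, Filter.eventually_atTop] at hev
  obtain ⟨N, hN⟩ := hev
  have h1 : hfin.toFinset.sup (fun f => f N) + 1 ≤ f N := hN N le_rfl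
  have h2 : f N ≤ hfin.toFinset.sup (fun f => f N) :=
    Finset.le_sup (f := fun f => f N) (hfin.mem_toFinset.mpr hf)
  exact Nat.not_succ_le_self _ (le_trans h1 h2)

lemma dominating_univ : Dominating Set.univ :=
  fun g => ⟨g, Set.mem_univ g, Filter.Eventually.of_forall (fun _ => le_rfl)⟩



/-- The critical cardinality of `Ufin(O,Ω)` — the least cardinality of a
set of reals not satisfying `Ufin(O,Ω)` — equals the dominating number `𝔡`. -/
theorem non_ufinOOmega_eq_dominating_number :
    sInf {c : Cardinal | ∃ X : Set ℝ, ¬ UfinOOmega ↥X ∧ Cardinal.mk ↥X = c} =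
    sInf {c : Cardinal | ∃ Y : Set (ℕ → ℕ), Dominating Y ∧ Cardinal.mk ↥Y = c} := by
  
  have hmk : ∀ Y : Set (ℕ → ℕ), Dominating Y →
      ∃ X : Set ℝ, ¬ UfinOOmega ↥X ∧ Cardinal.mk ↥X ≤ Cardinal.mk ↥Y := by
    intro Y hY
    refine ⟨Emap '' (Y ∪ Qset), ?_, ?_⟩
    · intro hU
      exact not_ufin_union_Qset hY
        (ufin_congr (embRestrict Emap Emap_isEmbedding (Y ∪ Qset)).symm hU)
    · rw [Cardinal.mk_image_eq Emap_isEmbedding.injective]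
      refine le_trans (Cardinal.mk_union_le Y Qset) ?_
      have h1 : Cardinal.mk ↥Qset ≤ Cardinal.aleph0 := by
        haveI := Qset_countable.to_subtype
        exact Cardinal.mk_le_aleph0
      have h2 : Cardinal.aleph0 ≤ Cardinal.mk ↥Y := by
        haveI := (dominating_infinite hY).to_subtype
        exact Cardinal.aleph0_le_mk ↥Y
      calc Cardinal.mk ↥Y + Cardinal.mk ↥Qset ≤ Cardinal.mk ↥Y + Cardinal.aleph0 :=
            add_le_add_right h1 _
        _ = Cardinal.mk ↥Y := Cardinal.add_eq_left h2 h2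
  have hLHSne : {c : Cardinal | ∃ X : Set ℝ, ¬ UfinOOmega ↥X ∧ Cardinal.mk ↥X = c}.Nonempty := by
    obtain ⟨X, hX, _⟩ := hmk Set.univ dominating_univ
    exact ⟨Cardinal.mk ↥X, X, hX, rfl⟩
  have hRHSne : {c : Cardinal | ∃ Y : Set (ℕ → ℕ), Dominating Y ∧ Cardinal.mk ↥Y = c}.Nonempty :=
    ⟨Cardinal.mk ↥(Set.univ : Set (ℕ → ℕ)), Set.univ, dominating_univ, rfl⟩
  apply le_antisymm
  · refine le_csInf hRHSne ?_
    rintro c ⟨Y, hY, rfl⟩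
    obtain ⟨X, hX, hle⟩ := hmk Y hY
    exact le_trans (csInf_le' ⟨X, hX, rfl⟩) hle
  · refine le_csInf hLHSne ?_
    rintro c ⟨X, hX, rfl⟩
    obtain ⟨D, hD, hle⟩ := exists_dominating_of_not_ufin ↥X hX
    exact le_trans (csInf_le' ⟨D, hD, rfl⟩) hle
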